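/- Let V be a finite set with the uniform probability measure, f : V × V → [0,∞) symmetric, and let 𝒫, 𝒬 be partitions of V with 𝒬 refining 𝒫. Then E[Φ ∘ f_𝒬] − E[Φ ∘ f_𝒫] ≥ (1/4)(E[|f_𝒬 − f_𝒫| · 1_{f_𝒫 ≤ 1}])², where Φ(x) = x² for x ≤ 2 and Φ(x) = 4x − 4 for x > 2. -/

import Mathlib

open Finset

/-- The convex function `Φ(x) = x²` for `x ≤ 2` and `Φ(x) = 4x − 4` for `x > 2`. -/
noncomputable def Phi (x : ℝ) : ℝ := if x ≤ 2 then x ^ 2 else 4 * x - 4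

/-- The stepping `f_𝒫` of `f : V × V → ℝ` with respect to a partition `𝒫` of `V`: on each
block `A × B` it is the average of `f` over `A × B`. -/
noncomputable def stepFn {V : Type*} [DecidableEq V] [Fintype V]
    (P : Finpartition (Finset.univ : Finset V)) (f : V → V → ℝ) (x y : V) : ℝ :=
  (∑ a ∈ P.part x, ∑ b ∈ P.part y, f a b) / (((P.part x).card : ℝ) * ((P.part y).card : ℝ))

/-! ### Auxiliary real-analysis lemmas -/

/-- A subgradient of `Phi`. -/
noncomputable def phi' (x : ℝ) : ℝ := if x ≤ 2 then 2 * x else 4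

/-- The convex lower-bound profile. -/
noncomputable def psi (t : ℝ) : ℝ := if t ≤ 2 then t ^ 2 / 4 else t - 1

lemma gap_ge (a b : ℝ) (ha : 0 ≤ a) (hb : 0 ≤ b) :
    psi (|b - a| * (if a ≤ 1 then 1 else 0)) ≤ Phi b - Phi a - phi' a * (b - a) := by
  by_cases ha1 : a ≤ 1
  · rw [if_pos ha1, mul_one]
    have ha2 : a ≤ 2 := by linarith
    by_cases hb2 : b ≤ 2
    · have habs : |b - a| ≤ 2 := abs_le.2 ⟨by linarith, by linarith⟩
      simp only [Phi, phi', psi, ha2, hb2, habs, if_true]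
      nlinarith [sq_abs (b - a), sq_nonneg (b - a)]
    · push_neg at hb2
      have habs : |b - a| = b - a := abs_of_nonneg (by linarith)
      rw [habs]
      by_cases hD : b - a ≤ 2
      · simp only [Phi, phi', psi, ha2, not_le.2 hb2, hD, if_true, if_false]
        nlinarith [sq_nonneg (b - a), sq_nonneg (a - 1), sq_nonneg (b - 3)]
      · simp only [Phi, phi', psi, ha2, not_le.2 hb2, hD, if_true, if_false]
        push_neg at hD
        nlinarith [mul_nonneg (by linarith : (0:ℝ) ≤ 1 - a)
          (by linarith : (0:ℝ) ≤ 2 * b - a - 2)]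
  · rw [if_neg ha1, mul_zero, psi, if_pos (by norm_num : (0:ℝ) ≤ 2)]
    rw [show (0:ℝ)^2/4 = 0 by norm_num]
    by_cases ha2 : a ≤ 2 <;> by_cases hb2 : b ≤ 2 <;>
      simp only [Phi, phi', ha2, hb2, if_true, if_false]
    · nlinarith [sq_nonneg (b - a)]
    · push_neg at hb2; nlinarith [sq_nonneg (b - a), sq_nonneg (b - 2)]
    · nlinarith [sq_nonneg (b - 2)]
    · linarith

lemma tangent_ge (m t : ℝ) (hm2 : m ≤ 2) (_ht : 0 ≤ t) :
    m ^ 2 / 4 + (m / 2) * (t - m) ≤ psi t := by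
  by_cases ht2 : t ≤ 2
  · rw [psi, if_pos ht2]; nlinarith [sq_nonneg (t - m)]
  · rw [psi, if_neg ht2]; push_neg at ht2
    nlinarith [sq_nonneg (2 - m), mul_nonneg (by linarith : (0:ℝ) ≤ t - 2)
      (by linarith : (0:ℝ) ≤ 2 - m)]

/-! ### Auxiliary partition/averaging lemmas -/

section Helpers
variable {V : Type*} [DecidableEq V] [Fintype V]

lemma part_eq_part {R : Finpartition (univ : Finset V)} {a x : V} (h : a ∈ R.part x) :
    R.part a = R.part x :=
  R.part_eq_of_mem (R.part_mem.2 (mem_univ x)) h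

lemma mem_part_symm {R : Finpartition (univ : Finset V)} {a x : V} (h : a ∈ R.part x) :
    x ∈ R.part a := by
  rw [part_eq_part h]; exact R.mem_part (mem_univ x)

lemma part_card_pos (R : Finpartition (univ : Finset V)) (x : V) : 0 < (R.part x).card :=
  card_pos.2 ⟨x, R.mem_part (mem_univ x)⟩

lemma sum_avg (R : Finpartition (univ : Finset V)) (v : V → ℝ) :
    ∑ x, (∑ a ∈ R.part x, v a) / ((R.part x).card : ℝ) = ∑ x, v x := by
  have h1 : ∀ x : V, (∑ a ∈ R.part x, v a) / ((R.part x).card : ℝ)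
      = ∑ a, if a ∈ R.part x then v a / ((R.part a).card : ℝ) else 0 := by
    intro x
    rw [Finset.sum_ite_mem, univ_inter, sum_div]
    exact Finset.sum_congr rfl fun a ha => by rw [part_eq_part ha]
  calc ∑ x, (∑ a ∈ R.part x, v a) / ((R.part x).card : ℝ)
      = ∑ x, ∑ a, if a ∈ R.part x then v a / ((R.part a).card : ℝ) else 0 :=
        sum_congr rfl fun x _ => h1 x
    _ = ∑ a, ∑ x, if a ∈ R.part x then v a / ((R.part a).card : ℝ) else 0 := sum_comm
    _ = ∑ a, ∑ x, if x ∈ R.part a then v a / ((R.part a).card : ℝ) else 0 := by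
        refine sum_congr rfl fun a _ => sum_congr rfl fun x _ => ?_
        by_cases h : a ∈ R.part x
        · rw [if_pos h, if_pos (mem_part_symm h)]
        · rw [if_neg h, if_neg fun h' => h (mem_part_symm h')]
    _ = ∑ a, ((R.part a).card : ℝ) * (v a / ((R.part a).card : ℝ)) := by
        refine sum_congr rfl fun a _ => ?_
        rw [Finset.sum_ite_mem, univ_inter, sum_const, nsmul_eq_mul]
    _ = ∑ x, v x := by
        refine sum_congr rfl fun a _ => ?_
        have hc : (((R.part a).card : ℝ)) ≠ 0 := by
          exact_mod_cast (part_card_pos R a).ne'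
        rw [mul_comm, div_mul_cancel₀ _ hc]

lemma sum_avg2 (R : Finpartition (univ : Finset V)) (t : V → V → ℝ) :
    ∑ x, ∑ y, (∑ a ∈ R.part x, ∑ b ∈ R.part y, t a b) /
      (((R.part x).card : ℝ) * ((R.part y).card : ℝ)) = ∑ x, ∑ y, t x y := by
  have step1 : ∀ x : V, ∑ y, (∑ a ∈ R.part x, ∑ b ∈ R.part y, t a b) /
      (((R.part x).card : ℝ) * ((R.part y).card : ℝ))
      = ∑ y, (∑ a ∈ R.part x, t a y) / ((R.part x).card : ℝ) := by
    intro x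
    rw [show (∑ y, (∑ a ∈ R.part x, t a y) / ((R.part x).card : ℝ))
        = ∑ y, (∑ b ∈ R.part y, (∑ a ∈ R.part x, t a b) / ((R.part x).card : ℝ)) /
            ((R.part y).card : ℝ) from
      (sum_avg R (fun b => (∑ a ∈ R.part x, t a b) / ((R.part x).card : ℝ))).symm]
    refine sum_congr rfl fun y _ => ?_
    rw [← sum_div, div_div, Finset.sum_comm]
  calc ∑ x, ∑ y, (∑ a ∈ R.part x, ∑ b ∈ R.part y, t a b) /
        (((R.part x).card : ℝ) * ((R.part y).card : ℝ))
      = ∑ x, ∑ y, (∑ a ∈ R.part x, t a y) / ((R.part x).card : ℝ) :=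
        sum_congr rfl fun x _ => step1 x
    _ = ∑ y, ∑ x, (∑ a ∈ R.part x, t a y) / ((R.part x).card : ℝ) := sum_comm
    _ = ∑ y, ∑ x, t x y := sum_congr rfl fun y _ => sum_avg R (fun a => t a y)
    _ = ∑ x, ∑ y, t x y := sum_comm

lemma sum_weight_stepFn (R : Finpartition (univ : Finset V)) (f w : V → V → ℝ)
    (hw : ∀ x y a b, a ∈ R.part x → b ∈ R.part y → w a b = w x y) :
    ∑ x, ∑ y, w x y * stepFn R f x y = ∑ x, ∑ y, w x y * f x y := by
  rw [show (∑ x, ∑ y, w x y * f x y)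
      = ∑ x, ∑ y, (∑ a ∈ R.part x, ∑ b ∈ R.part y, w a b * f a b) /
          (((R.part x).card : ℝ) * ((R.part y).card : ℝ)) from
    (sum_avg2 R (fun a b => w a b * f a b)).symm]
  refine sum_congr rfl fun x _ => sum_congr rfl fun y _ => ?_
  have key : ∑ a ∈ R.part x, ∑ b ∈ R.part y, w a b * f a b
      = w x y * ∑ a ∈ R.part x, ∑ b ∈ R.part y, f a b := by
    rw [mul_sum]
    refine sum_congr rfl fun a ha => ?_
    rw [mul_sum]
    exact sum_congr rfl fun b hb => by rw [hw x y a b ha hb]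
  rw [stepFn, key, mul_div_assoc]

lemma part_subset_of_le {Q P : Finpartition (univ : Finset V)} (h : Q ≤ P) (x : V) :
    Q.part x ⊆ P.part x := by
  obtain ⟨c, hc, hsub⟩ := h (Q.part_mem.2 (mem_univ x))
  rwa [P.part_eq_of_mem hc (hsub (Q.mem_part (mem_univ x)))]

lemma stepFn_meas (P : Finpartition (univ : Finset V)) (f : V → V → ℝ) {x y a b : V}
    (ha : a ∈ P.part x) (hb : b ∈ P.part y) : stepFn P f a b = stepFn P f x y := by
  unfold stepFn; rw [part_eq_part ha, part_eq_part hb]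

lemma stepFn_nonneg (R : Finpartition (univ : Finset V)) (f : V → V → ℝ)
    (hnn : ∀ x y, 0 ≤ f x y) (x y : V) : 0 ≤ stepFn R f x y :=
  div_nonneg (sum_nonneg fun a _ => sum_nonneg fun b _ => hnn a b)
    (mul_nonneg (Nat.cast_nonneg _) (Nat.cast_nonneg _))

end Helpers

/-- **Energy increment (defect) inequality for refinements.** -/
theorem energy_increment {V : Type*} [DecidableEq V] [Fintype V] [Nonempty V]
    (f : V → V → ℝ) (hsymm : ∀ x y, f x y = f y x) (hnn : ∀ x y, 0 ≤ f x y)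
    (P Q : Finpartition (Finset.univ : Finset V)) (hQP : Q ≤ P) :
    (∑ x, ∑ y, Phi (stepFn Q f x y)) / ((Fintype.card V : ℝ)) ^ 2 -
        (∑ x, ∑ y, Phi (stepFn P f x y)) / ((Fintype.card V : ℝ)) ^ 2 ≥
      (1 / 4) * ((∑ x, ∑ y, |stepFn Q f x y - stepFn P f x y| *
          (if stepFn P f x y ≤ 1 then 1 else 0)) / ((Fintype.card V : ℝ)) ^ 2) ^ 2 := by
  have hn0 : (0:ℝ) < (Fintype.card V : ℝ) := by exact_mod_cast Fintype.card_pos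
  set N : ℝ := ((Fintype.card V : ℝ)) ^ 2 with hN
  have hN0 : (0:ℝ) < N := by positivity
  have hg0 : ∀ x y, 0 ≤ stepFn Q f x y := fun x y => stepFn_nonneg Q f hnn x y
  have hh0 : ∀ x y, 0 ≤ stepFn P f x y := fun x y => stepFn_nonneg P f hnn x y
  -- two martingale identities
  have E1 : ∑ x, ∑ y, phi' (stepFn P f x y) * stepFn Q f x y
      = ∑ x, ∑ y, phi' (stepFn P f x y) * stepFn P f x y :=
    (sum_weight_stepFn Q f (fun x y => phi' (stepFn P f x y))
        (fun x y a b ha hb => by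
          simp only [stepFn_meas P f (part_subset_of_le hQP x ha)
            (part_subset_of_le hQP y hb)])).trans
      (sum_weight_stepFn P f (fun x y => phi' (stepFn P f x y))
        (fun x y a b ha hb => by simp only [stepFn_meas P f ha hb])).symm
  have E2 : ∑ x, ∑ y, (if stepFn P f x y ≤ 1 then (1:ℝ) else 0) * stepFn Q f x y
      = ∑ x, ∑ y, (if stepFn P f x y ≤ 1 then (1:ℝ) else 0) * stepFn P f x y :=
    (sum_weight_stepFn Q f (fun x y => if stepFn P f x y ≤ 1 then (1:ℝ) else 0)
        (fun x y a b ha hb => by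
          simp only [stepFn_meas P f (part_subset_of_le hQP x ha)
            (part_subset_of_le hQP y hb)])).trans
      (sum_weight_stepFn P f (fun x y => if stepFn P f x y ≤ 1 then (1:ℝ) else 0)
        (fun x y a b ha hb => by simp only [stepFn_meas P f ha hb])).symm
  set SD : ℝ := ∑ x, ∑ y, |stepFn Q f x y - stepFn P f x y| *
      (if stepFn P f x y ≤ 1 then 1 else 0) with hSD
  have hD0 : ∀ x y : V, (0:ℝ) ≤ |stepFn Q f x y - stepFn P f x y| *
      (if stepFn P f x y ≤ 1 then 1 else 0) := by
    intro x y
    apply mul_nonneg (abs_nonneg _)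
    split_ifs <;> norm_num
  have hSD0 : 0 ≤ SD := sum_nonneg fun x _ => sum_nonneg fun y _ => hD0 x y
  have hsum1 : ∑ x : V, ∑ y : V, (1:ℝ) = N := by
    simp [Finset.sum_const, card_univ, hN, sq]
  have hSD2 : SD ≤ 2 * N := by
    have pt : ∀ x y : V, |stepFn Q f x y - stepFn P f x y| *
        (if stepFn P f x y ≤ 1 then 1 else 0)
        ≤ (if stepFn P f x y ≤ 1 then (1:ℝ) else 0) * stepFn Q f x y
          + (if stepFn P f x y ≤ 1 then (1:ℝ) else 0) * stepFn P f x y := by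
      intro x y
      have habs : |stepFn Q f x y - stepFn P f x y| ≤ stepFn Q f x y + stepFn P f x y :=
        abs_le.2 ⟨by linarith [hg0 x y, hh0 x y], by linarith [hg0 x y, hh0 x y]⟩
      split_ifs with hle
      · nlinarith
      · simp
    have h1 : SD ≤ ∑ x, ∑ y, ((if stepFn P f x y ≤ 1 then (1:ℝ) else 0) * stepFn Q f x y
        + (if stepFn P f x y ≤ 1 then (1:ℝ) else 0) * stepFn P f x y) := by
      rw [hSD]
      exact sum_le_sum fun x _ => sum_le_sum fun y _ => pt x y
    rw [Finset.sum_congr rfl (fun x _ => Finset.sum_add_distrib), Finset.sum_add_distrib, E2]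
      at h1
    have h2 : ∑ x, ∑ y, (if stepFn P f x y ≤ 1 then (1:ℝ) else 0) * stepFn P f x y
        ≤ ∑ x : V, ∑ y : V, (1:ℝ) := by
      refine sum_le_sum fun x _ => sum_le_sum fun y _ => ?_
      split_ifs with hle
      · simpa using hle
      · simp
    rw [hsum1] at h2
    linarith
  set m : ℝ := SD / N with hm
  have hm0 : 0 ≤ m := div_nonneg hSD0 hN0.le
  have hm2 : m ≤ 2 := by
    rw [hm, div_le_iff₀ hN0]; linarith
  have hSDm : SD = m * N := by
    rw [hm, div_mul_cancel₀ _ hN0.ne']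
  -- the main chain of (in)equalities
  have key : N * (m ^ 2 / 4) ≤ (∑ x, ∑ y, Phi (stepFn Q f x y))
      - (∑ x, ∑ y, Phi (stepFn P f x y)) := by
    have step_aff : ∑ x : V, ∑ y : V, (m ^ 2 / 4 + (m / 2) *
        (|stepFn Q f x y - stepFn P f x y| * (if stepFn P f x y ≤ 1 then 1 else 0) - m))
        = N * (m ^ 2 / 4) + (m / 2) * (SD - N * m) := by
      simp only [Finset.sum_add_distrib, Finset.sum_sub_distrib, ← Finset.mul_sum,
        Finset.sum_const, card_univ, nsmul_eq_mul, ← hSD]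
      rw [hN]; ring
    have step_tangent : ∑ x : V, ∑ y : V, (m ^ 2 / 4 + (m / 2) *
        (|stepFn Q f x y - stepFn P f x y| * (if stepFn P f x y ≤ 1 then 1 else 0) - m))
        ≤ ∑ x, ∑ y, psi (|stepFn Q f x y - stepFn P f x y| *
            (if stepFn P f x y ≤ 1 then 1 else 0)) :=
      sum_le_sum fun x _ => sum_le_sum fun y _ => tangent_ge m _ hm2 (hD0 x y)
    have step_gap : ∑ x : V, ∑ y : V, psi (|stepFn Q f x y - stepFn P f x y| *
          (if stepFn P f x y ≤ 1 then 1 else 0))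
        ≤ ∑ x, ∑ y, (Phi (stepFn Q f x y) - Phi (stepFn P f x y)
            - phi' (stepFn P f x y) * (stepFn Q f x y - stepFn P f x y)) :=
      sum_le_sum fun x _ => sum_le_sum fun y _ =>
        gap_ge (stepFn P f x y) (stepFn Q f x y) (hh0 x y) (hg0 x y)
    have step_id : ∑ x : V, ∑ y : V, (Phi (stepFn Q f x y) - Phi (stepFn P f x y)
          - phi' (stepFn P f x y) * (stepFn Q f x y - stepFn P f x y))
        = (∑ x, ∑ y, Phi (stepFn Q f x y)) - (∑ x, ∑ y, Phi (stepFn P f x y)) := by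
      have pt : ∀ x y : V, Phi (stepFn Q f x y) - Phi (stepFn P f x y)
          - phi' (stepFn P f x y) * (stepFn Q f x y - stepFn P f x y)
          = (Phi (stepFn Q f x y) - Phi (stepFn P f x y))
            - (phi' (stepFn P f x y) * stepFn Q f x y
              - phi' (stepFn P f x y) * stepFn P f x y) := fun x y => by ring
      rw [Finset.sum_congr rfl fun x _ => Finset.sum_congr rfl fun y _ => pt x y]
      simp only [Finset.sum_sub_distrib]
      rw [E1]
      ring
    rw [step_id] at step_gap
    rw [step_aff] at step_tangent
    rw [hSDm] at step_tangent
    have : (m / 2) * (m * N - N * m) = 0 := by ring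
    linarith
  -- conclude
  rw [ge_iff_le, ← sub_div, le_div_iff₀ hN0]
  have : 1 / 4 * m ^ 2 * N = N * (m ^ 2 / 4) := by ring
  linarith
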